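/- Let S be a set equipped with two metrics m and m′, inducing topologies τ and τ′ respectively, such that τ′ is coarser than τ and every open m-ball is a Borel set for τ′. Let S₀ ⊆ S be a set such that whenever a sequence converges in τ′ to a point of S₀, it also converges in τ to that point. Suppose Xₙ : Ω → S converges in distribution (in the Hoffmann–Jørgensen sense) with respect to τ′ to a map X : Ω → S that is Borel measurable with respect to τ and takes all its values in S₀. Then Xₙ converges in distribution (in the Hoffmann–Jørgensen sense) to X with respect to τ. -/

import Mathlib

open MeasureTheory Filter Set Topology

/-- The outer expectation `E* ξ`: the infimum of `E ζ` over all integrable random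
variables `ζ ≥ ξ` almost surely. -/
noncomputable def outerExp {Ω : Type*} [MeasurableSpace Ω] (μ : Measure Ω)
    (ξ : Ω → ℝ) : ℝ :=
  sInf {c : ℝ | ∃ ζ : Ω → ℝ, Measurable ζ ∧ Integrable ζ μ ∧
    (∀ᵐ ω ∂μ, ξ ω ≤ ζ ω) ∧ c = ∫ ω, ζ ω ∂μ}

/-- Hoffmann–Jørgensen convergence in distribution with respect to an explicitly
given topology `τ` on `S`: `E* f(Xₙ) → E f(Y)` for every `τ`-continuous bounded `f`. -/
def TendstoInDistHJ {Ω S : Type*} [MeasurableSpace Ω] (τ : TopologicalSpace S)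
    (μ : Measure Ω) (X : ℕ → Ω → S) (Y : Ω → S) : Prop :=
  ∀ f : S → ℝ, Continuous[τ, _] f → (∃ C : ℝ, ∀ x : S, |f x| ≤ C) →
    Tendsto (fun n => outerExp μ fun ω => f (X n ω)) atTop
      (nhds (∫ ω, f (Y ω) ∂μ))

/-- The topology induced by a metric. -/
def metricTopology {S : Type*} (m : MetricSpace S) : TopologicalSpace S :=
  m.toPseudoMetricSpace.toUniformSpace.toTopologicalSpace

section UpReg
variable {S : Type*} [PseudoMetricSpace S] [Nonempty S]

/-- Lipschitz upper regularization. -/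
noncomputable def upReg (f : S → ℝ) (k : ℕ) (x : S) : ℝ :=
  ⨆ y : S, (f y - k * dist x y)

variable {f : S → ℝ} {C : ℝ}

lemma upReg_bddAbove (hC : ∀ x, f x ≤ C) (k : ℕ) (x : S) :
    BddAbove (Set.range fun y => f y - k * dist x y) := by
  refine ⟨C, ?_⟩
  rintro _ ⟨y, rfl⟩
  exact (sub_le_self _ (by positivity)).trans (hC y)

lemma le_upReg (hC : ∀ x, f x ≤ C) (k : ℕ) (x : S) : f x ≤ upReg f k x := by
  have := le_ciSup (upReg_bddAbove hC k x) x
  simp only [dist_self, mul_zero, sub_zero] at this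
  exact this

lemma upReg_le (hC : ∀ x, f x ≤ C) (k : ℕ) (x : S) : upReg f k x ≤ C :=
  ciSup_le fun y => (sub_le_self _ (by positivity)).trans (hC y)

lemma upReg_anti (hC : ∀ x, f x ≤ C) (x : S) {j k : ℕ} (hjk : j ≤ k) :
    upReg f k x ≤ upReg f j x := by
  refine ciSup_le fun y => (le_ciSup (upReg_bddAbove hC j x) y).trans' ?_
  have h1 : (j : ℝ) * dist x y ≤ (k : ℝ) * dist x y :=
    mul_le_mul_of_nonneg_right (Nat.cast_le.2 hjk) dist_nonneg
  linarith

lemma upReg_continuous (hC : ∀ x, f x ≤ C) (k : ℕ) : Continuous (upReg f k) := by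
  have hlip : ∀ x x', upReg f k x ≤ upReg f k x' + k * dist x x' := by
    intro x x'
    refine ciSup_le fun y => ?_
    have ht : dist x' y ≤ dist x x' + dist x y := by
      rw [dist_comm x x']; exact dist_triangle x' x y
    have hk : (0:ℝ) ≤ (k:ℝ) := Nat.cast_nonneg k
    have h2 : (k:ℝ) * dist x' y ≤ (k:ℝ) * (dist x x' + dist x y) :=
      mul_le_mul_of_nonneg_left ht hk
    have h3 := le_ciSup (upReg_bddAbove hC k x') y
    have : f y - (k:ℝ) * dist x' y ≤ upReg f k x' := h3
    nlinarith
  have : LipschitzWith (k : NNReal) (upReg f k) := by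
    refine LipschitzWith.of_dist_le_mul fun x x' => ?_
    rw [Real.dist_eq, abs_sub_le_iff]
    push_cast
    constructor
    · have := hlip x x'; linarith
    · have := hlip x' x; rw [dist_comm] at this; linarith
  exact this.continuous

lemma upReg_tendsto (hC : ∀ x, |f x| ≤ C) {x : S}
    (hx : ∀ u : ℕ → S, Tendsto u atTop (nhds x) →
      Tendsto (fun n => f (u n)) atTop (nhds (f x))) :
    Tendsto (fun k => upReg f k x) atTop (nhds (f x)) := by
  have hC' : ∀ y, f y ≤ C := fun y => (abs_le.1 (hC y)).2
  have hC'' : ∀ y, -C ≤ f y := fun y => (abs_le.1 (hC y)).1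
  rw [NormedAddCommGroup.tendsto_atTop]
  intro ε hε
  suffices h : ∃ K, upReg f K x < f x + ε by
    obtain ⟨K, hK⟩ := h
    refine ⟨K, fun k hk => ?_⟩
    have h1 := le_upReg hC' k x
    have h2 := upReg_anti hC' x hk
    rw [Real.norm_eq_abs, abs_lt]
    constructor <;> linarith
  by_contra hall
  push_neg at hall
  have hy : ∀ k : ℕ, ∃ y : S, f x + ε/2 < f y - k * dist x y := by
    intro k
    exact exists_lt_of_lt_ciSup (lt_of_lt_of_le (by linarith) (hall k))
  choose y hy using hy
  have hd : ∀ k : ℕ, (k:ℝ) * dist x (y k) < 2 * C := by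
    intro k
    have h1 := hC' (y k)
    have h2 := hC'' x
    have := hy k
    linarith
  have htends : Tendsto y atTop (nhds x) := by
    rw [tendsto_iff_dist_tendsto_zero]
    refine squeeze_zero' (Eventually.of_forall fun k => dist_nonneg) ?_
      (tendsto_const_div_atTop_nhds_zero_nat (2*C))
    filter_upwards [eventually_ge_atTop 1] with k hk
    have hk0 : (0:ℝ) < (k:ℝ) := by exact_mod_cast hk
    rw [dist_comm, le_div_iff₀ hk0]
    nlinarith [hd k]
  have := (hx y htends).eventually_lt_const (show f x < f x + ε/2 by linarith)
  obtain ⟨k, hk⟩ := this.exists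
  have := hy k
  have : (k:ℝ) * dist x (y k) ≥ 0 := by positivity
  linarith [hy k]

end UpReg

section Outer
variable {Ω : Type*} [MeasurableSpace Ω] (μ : Measure Ω) [IsProbabilityMeasure μ]

lemma const_mem_outerSet {ξ : Ω → ℝ} {C : ℝ} (h : ∀ ω, ξ ω ≤ C) :
    C ∈ {c : ℝ | ∃ ζ : Ω → ℝ, Measurable ζ ∧ Integrable ζ μ ∧
      (∀ᵐ ω ∂μ, ξ ω ≤ ζ ω) ∧ c = ∫ ω, ζ ω ∂μ} :=
  ⟨fun _ => C, measurable_const, integrable_const C, ae_of_all μ h, by simp⟩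

lemma outerSet_lb {ξ : Ω → ℝ} {C : ℝ} (h : ∀ ω, -C ≤ ξ ω) :
    ∀ c ∈ {c : ℝ | ∃ ζ : Ω → ℝ, Measurable ζ ∧ Integrable ζ μ ∧
      (∀ᵐ ω ∂μ, ξ ω ≤ ζ ω) ∧ c = ∫ ω, ζ ω ∂μ}, -C ≤ c := by
  rintro c ⟨ζ, hm, hi, hle, rfl⟩
  calc -C = ∫ _, (-C : ℝ) ∂μ := by simp
  _ ≤ ∫ ω, ζ ω ∂μ :=
    integral_mono_ae (integrable_const _) hi (hle.mono fun ω h2 => (h ω).trans h2)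

lemma outerExp_mono' {ξ ξ' : Ω → ℝ} {C : ℝ} (hb : ∀ ω, -C ≤ ξ ω)
    (hb' : ∀ ω, ξ' ω ≤ C) (hle : ∀ ω, ξ ω ≤ ξ' ω) :
    outerExp μ ξ ≤ outerExp μ ξ' := by
  refine csInf_le_csInf ⟨-C, outerSet_lb μ hb⟩ ⟨C, const_mem_outerSet μ hb'⟩ ?_
  rintro c ⟨ζ, h1, h2, h3, h4⟩
  exact ⟨ζ, h1, h2, h3.mono fun ω h => (hle ω).trans h, h4⟩

lemma neg_outerExp_neg_le {ξ : Ω → ℝ} {C : ℝ} (hb : ∀ ω, |ξ ω| ≤ C) :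
    -(outerExp μ (fun ω => -ξ ω)) ≤ outerExp μ ξ := by
  have hb1 : ∀ ω, ξ ω ≤ C := fun ω => (abs_le.1 (hb ω)).2
  have hb2 : ∀ ω, -ξ ω ≤ C := fun ω => by have := (abs_le.1 (hb ω)).1; linarith
  refine le_csInf ⟨C, const_mem_outerSet μ hb1⟩ ?_
  rintro c ⟨ζ, hm, hi, hle, rfl⟩
  rw [neg_le]
  refine le_csInf ⟨C, const_mem_outerSet μ hb2⟩ ?_
  rintro c' ⟨ζ', hm', hi', hle', rfl⟩
  have h0 : (0:ℝ) ≤ ∫ ω, (ζ ω + ζ' ω) ∂μ := by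
    refine integral_nonneg_of_ae ?_
    filter_upwards [hle, hle'] with ω h1 h2
    simp only [Pi.zero_apply]
    linarith
  rw [integral_add hi hi'] at h0
  linarith

end Outer


/-- Convergence in distribution for a coarser metric topology upgrades to the finer
topology when the limit takes values in a set on which the two notions of sequential
convergence agree (Corollary D.1). -/

theorem tendstoInDistHJ_of_coarser
    {Ω S : Type*} [MeasurableSpace Ω] (μ : Measure Ω) [IsProbabilityMeasure μ]
    (m m' : MetricSpace S)
    (hcoarser : ∀ s : Set S,
      IsOpen[metricTopology m'] s → IsOpen[metricTopology m] s)
    (hballs : ∀ (c : S) (r : ℝ),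
      MeasurableSet[@borel S (metricTopology m')] (@Metric.ball S m.toPseudoMetricSpace c r))
    (S₀ : Set S)
    (hS₀ : ∀ (u : ℕ → S) (x : S), x ∈ S₀ →
      Tendsto u atTop (@nhds S (metricTopology m') x) →
      Tendsto u atTop (@nhds S (metricTopology m) x))
    (X : ℕ → Ω → S) (Y : Ω → S)
    (hY : @Measurable Ω S _ (@borel S (metricTopology m)) Y)
    (hrange : ∀ ω, Y ω ∈ S₀)
    (hXY : TendstoInDistHJ (metricTopology m') μ X Y) :
    TendstoInDistHJ (metricTopology m) μ X Y := by
  haveI : Nonempty Ω := by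
    by_contra h
    rw [not_nonempty_iff] at h
    have h1 := measure_univ (μ := μ)
    rw [Set.univ_eq_empty_iff.2 h, measure_empty] at h1
    exact zero_ne_one h1
  haveI : Nonempty S := ⟨Y (Classical.arbitrary Ω)⟩
  have key : ∀ (g : S → ℝ) (D : ℝ), Continuous[metricTopology m, _] g → (∀ x, |g x| ≤ D) →
      ∀ ε > (0:ℝ), ∀ᶠ n in atTop,
        outerExp μ (fun ω => g (X n ω)) ≤ (∫ ω, g (Y ω) ∂μ) + ε := by
    intro g D hg hD ε hε
    have hD' : ∀ x, g x ≤ D := fun x => (abs_le.1 (hD x)).2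
    have hD'' : ∀ x, -D ≤ g x := fun x => (abs_le.1 (hD x)).1
    let P : PseudoMetricSpace S := m'.toPseudoMetricSpace
    let h : ℕ → S → ℝ := fun k => @upReg S P g k
    have hle : ∀ k x, g x ≤ h k x := fun k x => @le_upReg S P _ g D hD' k x
    have hub : ∀ k x, h k x ≤ D := fun k x => @upReg_le S P _ g D hD' k x
    have hlb : ∀ k x, -D ≤ h k x := fun k x => (hD'' x).trans (hle k x)
    have hcont' : ∀ k, Continuous[metricTopology m', _] (h k) :=
      fun k => @upReg_continuous S P _ g D hD' k
    have hcontm : ∀ k, Continuous[metricTopology m, _] (h k) := by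
      intro k
      refine continuous_def.2 fun s hs => hcoarser _ ?_
      exact continuous_def.1 (hcont' k) s hs
    have hmeasS : ∀ k, @Measurable S ℝ (@borel S (metricTopology m)) _ (h k) := by
      intro k
      letI : TopologicalSpace S := metricTopology m
      letI : MeasurableSpace S := @borel S (metricTopology m)
      haveI : BorelSpace S := ⟨rfl⟩
      exact (hcontm k).measurable
    have hptw : ∀ ω, Tendsto (fun k => h k (Y ω)) atTop (nhds (g (Y ω))) := by
      intro ω
      refine @upReg_tendsto S P _ g D hD (Y ω) ?_
      intro u hu
      have h5 : Tendsto u atTop (@nhds S (metricTopology m) (Y ω)) :=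
        hS₀ u (Y ω) (hrange ω) hu
      exact (@Continuous.tendsto S ℝ (metricTopology m) _ g hg (Y ω)).comp h5
    have hJ : Tendsto (fun k => ∫ ω, h k (Y ω) ∂μ) atTop (nhds (∫ ω, g (Y ω) ∂μ)) := by
      refine tendsto_integral_of_dominated_convergence (fun _ => D)
        (fun k => ((hmeasS k).comp hY).aestronglyMeasurable) (integrable_const D)
        (fun k => ae_of_all μ fun ω => ?_) (ae_of_all μ hptw)
      rw [Real.norm_eq_abs, abs_le]
      exact ⟨hlb k _, hub k _⟩
    obtain ⟨k, hk⟩ : ∃ k, ∫ ω, h k (Y ω) ∂μ < (∫ ω, g (Y ω) ∂μ) + ε/2 :=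
      (hJ.eventually_lt_const (by linarith)).exists
    have hXk := hXY (h k) (hcont' k) ⟨D, fun x => abs_le.2 ⟨hlb k x, hub k x⟩⟩
    have hev := hXk.eventually_lt_const
      (show ∫ ω, h k (Y ω) ∂μ < (∫ ω, g (Y ω) ∂μ) + ε by linarith)
    filter_upwards [hev] with n hn
    calc outerExp μ (fun ω => g (X n ω)) ≤ outerExp μ (fun ω => h k (X n ω)) :=
          outerExp_mono' μ (fun ω => hD'' _) (fun ω => hub k _) (fun ω => hle k _)
    _ ≤ (∫ ω, g (Y ω) ∂μ) + ε := hn.le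
  rintro f hf ⟨C, hC⟩
  rw [NormedAddCommGroup.tendsto_atTop]
  intro ε hε
  have hnegf : Continuous[metricTopology m, _] (fun x => -f x) :=
    @Continuous.comp S ℝ ℝ (metricTopology m) _ _ _ _ continuous_neg hf
  have hCneg : ∀ x, |(fun x => -f x) x| ≤ C := fun x => by
    simpa only [abs_neg] using hC x
  have h1 := key f C hf hC (ε/2) (by linarith)
  have h2 := key (fun x => -f x) C hnegf hCneg (ε/2) (by linarith)
  rw [eventually_atTop] at h1 h2
  obtain ⟨N₁, hN₁⟩ := h1
  obtain ⟨N₂, hN₂⟩ := h2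
  refine ⟨max N₁ N₂, fun n hn => ?_⟩
  have hup := hN₁ n (le_of_max_le_left hn)
  have hdn := hN₂ n (le_of_max_le_right hn)
  have hneg : -(outerExp μ (fun ω => -f (X n ω))) ≤ outerExp μ (fun ω => f (X n ω)) :=
    neg_outerExp_neg_le μ (fun ω => hC (X n ω))
  rw [show (∫ ω, (fun x => -f x) (Y ω) ∂μ) = -∫ ω, f (Y ω) ∂μ from integral_neg _] at hdn
  have hlow : (∫ ω, f (Y ω) ∂μ) - ε/2 ≤ outerExp μ (fun ω => f (X n ω)) := by
    have : outerExp μ (fun ω => -f (X n ω)) ≤ -(∫ ω, f (Y ω) ∂μ) + ε/2 := hdn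
    linarith
  rw [Real.norm_eq_abs, abs_lt]
  constructor <;> [linarith; linarith]
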